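/- Under the Shared-Permutations protocol with F^in = ∅ and |F^d| ≤ ε·n, a fixed packet p with destination d reaches the destination within at most C_1 hops with probability at least 1 − n^{−3}, where C_1 is a value bounded above by 5 log_{1/ε} n. -/

import Mathlib

/-!
STATEMENT 16 (Lemma 15, Shared-Permutations protocol: few hops when `F^in = ∅`).

Setting as in Statement 15: bad nodes `VB` with `|VB| ≤ ε·n` (only destination edges
fail), globally shared independent uniformly random orderings `π_0, π_1, …` of
`V \ {d}`; a packet with hop count `t` at `v` goes directly to `d` if `v ∉ VB` and
otherwise to the cyclic successor of `v` in `π_t`.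

Claim: a fixed packet reaches the destination within at most `C₁` hops with
probability at least `1 - n⁻³`, where `C₁` is a value bounded above by
`5·log_{1/ε} n`.
-/

open scoped Classical
open Finset

noncomputable section

abbrev NodeOrder (n : ℕ) (d : Fin n) : Type := Fin (n - 1) ≃ {v : Fin n // v ≠ d}

def unifProb {Ω : Type*} [Fintype Ω] (P : Ω → Prop) : ℝ :=
  ((Finset.univ : Finset Ω).filter P).card / (Fintype.card Ω : ℝ)

def cycSucc {n : ℕ} {d : Fin n} (π : NodeOrder n d) (v : Fin n) : Fin n :=
  if h : v ≠ d then
    (π ⟨((π.symm ⟨v, h⟩).val + 1) % (n - 1), Nat.mod_lt _ (π.symm ⟨v, h⟩).pos⟩).1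
  else v

def routeSP {n M : ℕ} {d : Fin n} (VB : Finset (Fin n))
    (g : Fin M → NodeOrder n d) (s : Fin n) : ℕ → Fin n
  | 0 => s
  | t + 1 =>
      let v := routeSP VB g s t
      if v = d then d
      else if v ∉ VB then d
      else if h : t < M then cycSucc (g ⟨t, h⟩) v else v

variable {n : ℕ} {d : Fin n}

lemma cycSucc_ne (π : NodeOrder n d) {v : Fin n} (hv : v ≠ d) : cycSucc π v ≠ d := by
  unfold cycSucc
  rw [dif_pos hv]
  exact (π _).2

lemma cycSucc_ne_self (hn : 3 ≤ n) (π : NodeOrder n d) {v : Fin n} (hv : v ≠ d) :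
    cycSucc π v ≠ v := by
  unfold cycSucc
  rw [dif_pos hv]
  intro h
  set k := π.symm ⟨v, hv⟩ with hk
  have h2 : π ⟨(k.val + 1) % (n-1), Nat.mod_lt _ k.pos⟩ = π k := by
    rw [hk, Equiv.apply_symm_apply]
    exact Subtype.ext h
  have h3 : (k.val + 1) % (n-1) = k.val := congrArg Fin.val (π.injective h2)
  have hklt : k.val < n - 1 := k.isLt
  rcases Nat.lt_or_ge (k.val + 1) (n-1) with hc | hc
  · rw [Nat.mod_eq_of_lt hc] at h3; omega
  · have : k.val + 1 = n - 1 := by omega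
    rw [this, Nat.mod_self] at h3
    omega

lemma cycSucc_trans (π : NodeOrder n d) (σ : {v : Fin n // v ≠ d} ≃ {v : Fin n // v ≠ d})
    {v : Fin n} (hv : v ≠ d) (hσ : σ.symm ⟨v, hv⟩ = ⟨v, hv⟩) :
    cycSucc (π.trans σ) v = (σ ⟨cycSucc π v, cycSucc_ne π hv⟩).1 := by
  unfold cycSucc
  rw [dif_pos hv]
  have hsymm : (π.trans σ).symm ⟨v, hv⟩ = π.symm ⟨v, hv⟩ := by
    rw [Equiv.symm_trans_apply, hσ]
  simp only [hsymm, Equiv.trans_apply]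
  congr 1
  apply congrArg
  apply Subtype.ext
  simp [cycSucc, hv]

lemma count_succ_eq (hn : 3 ≤ n) {v : Fin n} (hv : v ≠ d)
    {w1 w2 : {x : Fin n // x ≠ d}} (h1 : w1.1 ≠ v) (h2 : w2.1 ≠ v) :
    ((univ : Finset (NodeOrder n d)).filter (fun π => cycSucc π v = w1.1)).card =
    ((univ : Finset (NodeOrder n d)).filter (fun π => cycSucc π v = w2.1)).card := by
  have hfix : (Equiv.swap w1 w2).symm ⟨v, hv⟩ = ⟨v, hv⟩ := by
    rw [Equiv.symm_swap]
    exact Equiv.swap_apply_of_ne_of_ne (fun h => h1 (congrArg Subtype.val h).symm)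
      (fun h => h2 (congrArg Subtype.val h).symm)
  apply Finset.card_equiv ((Equiv.refl (Fin (n-1))).equivCongr (Equiv.swap w1 w2))
  intro π
  simp only [mem_filter, mem_univ, true_and]
  have he : (Equiv.refl (Fin (n-1))).equivCongr (Equiv.swap w1 w2) π
      = π.trans (Equiv.swap w1 w2) := by
    ext x; simp [Equiv.equivCongr]
  rw [he, cycSucc_trans π _ hv hfix]
  constructor
  · intro h
    have : (⟨cycSucc π v, cycSucc_ne π hv⟩ : {x : Fin n // x ≠ d}) = w1 := Subtype.ext h
    rw [this, Equiv.swap_apply_left]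
  · intro h
    have h' : Equiv.swap w1 w2 ⟨cycSucc π v, cycSucc_ne π hv⟩ = w2 := Subtype.ext h
    have hx : (⟨cycSucc π v, cycSucc_ne π hv⟩ : {x : Fin n // x ≠ d})
        = (Equiv.swap w1 w2).symm w2 := (Equiv.eq_symm_apply _).mpr h'
    rw [Equiv.symm_swap, Equiv.swap_apply_right] at hx
    exact congrArg Subtype.val hx

lemma card_ordNe (hn : 3 ≤ n) {v : Fin n} (hv : v ≠ d) :
    ((univ : Finset {x : Fin n // x ≠ d}).filter (fun w => w.1 ≠ v)).card = n - 2 := by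
  have h1 : (univ : Finset {x : Fin n // x ≠ d}).filter (fun w => w.1 ≠ v)
      = univ.erase ⟨v, hv⟩ := by
    ext w
    simp only [mem_filter, mem_univ, true_and, mem_erase, and_true]
    constructor
    · intro h h'; exact h (congrArg Subtype.val h')
    · intro h h'; exact h (Subtype.ext h')
  rw [h1, Finset.card_erase_of_mem (mem_univ _), Finset.card_univ]
  have : Fintype.card {x : Fin n // x ≠ d} = n - 1 := by
    simp [Fintype.card_subtype_compl, Fintype.card_subtype_eq]
  rw [this]
  omega

lemma count_succ_mem_bound (hn : 3 ≤ n) {v : Fin n} (hv : v ≠ d)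
    (VB : Finset (Fin n)) (hd : d ∉ VB) :
    (n - 2) * ((univ : Finset (NodeOrder n d)).filter (fun π => cycSucc π v ∈ VB)).card ≤
    VB.card * Fintype.card (NodeOrder n d) := by
  classical
  set S : Finset {x : Fin n // x ≠ d} := univ.filter (fun w => w.1 ≠ v) with hS
  set cnt : {x : Fin n // x ≠ d} → ℕ :=
    fun w => ((univ : Finset (NodeOrder n d)).filter (fun π => cycSucc π v = w.1)).card with hcnt
  have hmemS : ∀ π : NodeOrder n d,
      (⟨cycSucc π v, cycSucc_ne π hv⟩ : {x : Fin n // x ≠ d}) ∈ S := by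
    intro π
    simp only [hS, mem_filter, mem_univ, true_and]
    exact cycSucc_ne_self hn π hv
  -- total count equals sum of fibers over S
  have htot : ∀ w ∈ S, (n - 2) * cnt w = Fintype.card (NodeOrder n d) := by
    intro w hw
    have hwv : w.1 ≠ v := (mem_filter.mp hw).2
    have hsum : ∑ w' ∈ S, cnt w' = Fintype.card (NodeOrder n d) := by
      rw [← Finset.card_univ, Finset.card_eq_sum_card_fiberwise
        (f := fun π : NodeOrder n d => (⟨cycSucc π v, cycSucc_ne π hv⟩ : {x : Fin n // x ≠ d}))
        (fun π _ => hmemS π)]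
      apply Finset.sum_congr rfl
      intro w' _
      refine congrArg Finset.card ?_
      ext π
      simp only [mem_filter, mem_univ, true_and]
      constructor
      · intro h; exact Subtype.ext h
      · intro h; exact congrArg Subtype.val h
    have hconst : ∀ w' ∈ S, cnt w' = cnt w := by
      intro w' hw'
      exact count_succ_eq hn hv (mem_filter.mp hw').2 hwv
    rw [Finset.sum_congr rfl hconst, Finset.sum_const, smul_eq_mul] at hsum
    rw [← hsum, card_ordNe hn hv]
  -- the VB-fiber sum
  set W : Finset {x : Fin n // x ≠ d} := S.filter (fun w => w.1 ∈ VB) with hW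
  have hsplit : ((univ : Finset (NodeOrder n d)).filter (fun π => cycSucc π v ∈ VB)).card
      = ∑ w ∈ W, cnt w := by
    rw [Finset.card_eq_sum_card_fiberwise
      (f := fun π : NodeOrder n d => (⟨cycSucc π v, cycSucc_ne π hv⟩ : {x : Fin n // x ≠ d}))
      (t := W) ?_]
    · apply Finset.sum_congr rfl
      intro w' _
      refine congrArg Finset.card ?_
      ext π
      simp only [mem_filter, mem_univ, true_and]
      constructor
      · intro h; exact congrArg Subtype.val h.2
      · intro h
        refine ⟨?_, Subtype.ext h⟩
        rw [h]
        exact (mem_filter.mp ‹w' ∈ W›).2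
    · intro π hπ
      exact mem_filter.mpr ⟨hmemS π, (mem_filter.mp hπ).2⟩
  have hWcard : W.card ≤ VB.card := by
    apply Finset.card_le_card_of_injOn (fun w => w.1)
    · intro w hw
      exact (mem_filter.mp hw).2
    · intro a _ b _ h
      exact Subtype.ext h
  calc (n - 2) * ((univ : Finset (NodeOrder n d)).filter (fun π => cycSucc π v ∈ VB)).card
      = ∑ w ∈ W, (n - 2) * cnt w := by rw [hsplit, Finset.mul_sum]
    _ = ∑ w ∈ W, Fintype.card (NodeOrder n d) := by
        apply Finset.sum_congr rfl
        intro w hw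
        exact htot w (mem_filter.mp hw).1
    _ = W.card * Fintype.card (NodeOrder n d) := by rw [Finset.sum_const, smul_eq_mul]
    _ ≤ VB.card * Fintype.card (NodeOrder n d) := Nat.mul_le_mul_right _ hWcard

variable {M : ℕ} {VB : Finset (Fin n)}

lemma routeSP_congr (g g' : Fin M → NodeOrder n d) (s : Fin n) (t : ℕ)
    (h : ∀ j : Fin M, j.1 < t → g j = g' j) :
    routeSP VB g s t = routeSP VB g' s t := by
  induction t with
  | zero => rfl
  | succ t ih =>
    have ih' := ih (fun j hj => h j (Nat.lt_succ_of_lt hj))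
    simp only [routeSP, ih']
    split_ifs with h1 h2 h3 <;>
      first
        | rfl
        | rw [h ⟨t, by assumption⟩ (Nat.lt_succ_self t)]

lemma routeSP_stay (g : Fin M → NodeOrder n d) (s : Fin n) {t : ℕ}
    (h : routeSP VB g s t = d) : ∀ u, t ≤ u → routeSP VB g s u = d := by
  intro u hu
  induction u with
  | zero => exact (Nat.le_zero.mp hu) ▸ h
  | succ u ih =>
    rcases Nat.lt_or_ge t (u + 1) with h1 | h1
    · have := ih (Nat.lt_succ_iff.mp h1)
      simp only [routeSP, this]
      simp
    · exact (Nat.le_antisymm hu h1) ▸ h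

lemma routeSP_fail_mem (hd : d ∉ VB) (g : Fin M → NodeOrder n d) (s : Fin n)
    (h : routeSP VB g s M ≠ d) : ∀ i < M, routeSP VB g s i ∈ VB := by
  intro i hi
  by_contra hmem
  apply h
  have h1 : routeSP VB g s (i + 1) = d := by
    simp only [routeSP]
    by_cases h2 : routeSP VB g s i = d
    · simp [h2]
    · simp [h2, hmem]
  exact routeSP_stay g s h1 M hi

section step

variable (hn : 3 ≤ n) (hd : d ∉ VB)

abbrev gluedAt {C1 : ℕ} (t : Fin C1) (a : NodeOrder n d)
    (f : {j : Fin C1 // j ≠ t} → NodeOrder n d) : Fin C1 → NodeOrder n d :=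
  (Equiv.funSplitAt t (NodeOrder n d)).symm (a, f)

lemma gluedAt_apply_ne {C1 : ℕ} (t : Fin C1) (a : NodeOrder n d)
    (f : {j : Fin C1 // j ≠ t} → NodeOrder n d) {j : Fin C1} (hj : j ≠ t) :
    gluedAt t a f j = f ⟨j, hj⟩ := by
  simp [gluedAt, Equiv.funSplitAt, hj]

lemma gluedAt_apply_self {C1 : ℕ} (t : Fin C1) (a : NodeOrder n d)
    (f : {j : Fin C1 // j ≠ t} → NodeOrder n d) :
    gluedAt t a f t = a := by
  simp [gluedAt, Equiv.funSplitAt]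

lemma route_gluedAt_indep {C1 : ℕ} (t : Fin C1) (a a' : NodeOrder n d)
    (f : {j : Fin C1 // j ≠ t} → NodeOrder n d) (s : Fin n) {i : ℕ} (hi : i ≤ t.1) :
    routeSP VB (gluedAt t a f) s i = routeSP VB (gluedAt t a' f) s i := by
  apply routeSP_congr
  intro j hj
  have hjt : j ≠ t := by
    intro h
    rw [h] at hj
    omega
  rw [gluedAt_apply_ne t a f hjt, gluedAt_apply_ne t a' f hjt]

end step

lemma count_step (hn : 3 ≤ n) (hd : d ∉ VB) {C1 : ℕ} (s : Fin n) {t : ℕ} (ht : t < C1) :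
    (n - 2) * ((univ : Finset (Fin C1 → NodeOrder n d)).filter
        (fun g => ∀ i ≤ t + 1, routeSP VB g s i ∈ VB)).card ≤
    VB.card * ((univ : Finset (Fin C1 → NodeOrder n d)).filter
        (fun g => ∀ i ≤ t, routeSP VB g s i ∈ VB)).card := by
  classical
  have hcard : Fintype.card (Fin (n-1)) = Fintype.card {v : Fin n // v ≠ d} := by
    simp [Fintype.card_subtype_compl, Fintype.card_subtype_eq]
  obtain ⟨a₀⟩ : Nonempty (NodeOrder n d) := Fintype.card_eq.mp hcard
  set tc : Fin C1 := ⟨t, ht⟩ with htc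
  have hsum : ∀ u : (Fin C1 → NodeOrder n d) → ℕ,
      ∑ g : Fin C1 → NodeOrder n d, u g
      = ∑ f : {j : Fin C1 // j ≠ tc} → NodeOrder n d, ∑ a : NodeOrder n d,
          u (gluedAt tc a f) := by
    intro u
    rw [← Equiv.sum_comp (Equiv.funSplitAt tc (NodeOrder n d)).symm u]
    rw [Fintype.sum_prod_type]
    exact Finset.sum_comm
  have e1 : ((univ : Finset (Fin C1 → NodeOrder n d)).filter
        (fun g => ∀ i ≤ t + 1, routeSP VB g s i ∈ VB)).card
      = ∑ f : {j : Fin C1 // j ≠ tc} → NodeOrder n d, ∑ a : NodeOrder n d,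
          if (∀ i ≤ t + 1, routeSP VB (gluedAt tc a f) s i ∈ VB) then 1 else 0 := by
    rw [Finset.card_filter]
    exact hsum _
  have e2 : ((univ : Finset (Fin C1 → NodeOrder n d)).filter
        (fun g => ∀ i ≤ t, routeSP VB g s i ∈ VB)).card
      = ∑ f : {j : Fin C1 // j ≠ tc} → NodeOrder n d, ∑ a : NodeOrder n d,
          if (∀ i ≤ t, routeSP VB (gluedAt tc a f) s i ∈ VB) then 1 else 0 := by
    rw [Finset.card_filter]
    exact hsum _
  rw [e1, e2, Finset.mul_sum, Finset.mul_sum]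
  apply Finset.sum_le_sum
  intro f _
  by_cases hPt : ∀ i ≤ t, routeSP VB (gluedAt tc a₀ f) s i ∈ VB
  · set r := routeSP VB (gluedAt tc a₀ f) s t with hr
    have hrVB : r ∈ VB := hPt t le_rfl
    have hrd : r ≠ d := fun h => hd (h ▸ hrVB)
    have hPt' : ∀ (a : NodeOrder n d), ∀ i ≤ t,
        routeSP VB (gluedAt tc a f) s i ∈ VB := by
      intro a i hi
      rw [route_gluedAt_indep tc a a₀ f s hi]
      exact hPt i hi
    have hroute : ∀ a : NodeOrder n d,
        routeSP VB (gluedAt tc a f) s (t+1) = cycSucc a r := by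
      intro a
      have hrt : routeSP VB (gluedAt tc a f) s t = r :=
        route_gluedAt_indep tc a a₀ f s le_rfl
      simp only [routeSP, hrt]
      rw [if_neg hrd, if_neg (not_not.mpr hrVB), dif_pos ht]
      rw [show (⟨t, ht⟩ : Fin C1) = tc from rfl, gluedAt_apply_self]
    have hiff : ∀ a : NodeOrder n d,
        (∀ i ≤ t+1, routeSP VB (gluedAt tc a f) s i ∈ VB) ↔ cycSucc a r ∈ VB := by
      intro a
      constructor
      · intro h
        rw [← hroute a]
        exact h (t+1) le_rfl
      · intro h i hi
        rcases Nat.lt_or_ge i (t+1) with h1 | h1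
        · exact hPt' a i (Nat.lt_succ_iff.mp h1)
        · rw [le_antisymm hi h1, hroute a]
          exact h
    have hL : (∑ a : NodeOrder n d,
          if (∀ i ≤ t+1, routeSP VB (gluedAt tc a f) s i ∈ VB) then 1 else 0)
        = ((univ : Finset (NodeOrder n d)).filter (fun a => cycSucc a r ∈ VB)).card := by
      rw [Finset.card_filter]
      exact Finset.sum_congr rfl (fun a _ => if_congr (hiff a) rfl rfl)
    have hR : (∑ a : NodeOrder n d,
          if (∀ i ≤ t, routeSP VB (gluedAt tc a f) s i ∈ VB) then 1 else 0)
        = Fintype.card (NodeOrder n d) := by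
      rw [Finset.sum_congr rfl (fun a _ => if_pos (hPt' a))]
      simp
    rw [hL, hR]
    exact count_succ_mem_bound hn hrd VB hd
  · have hz : ∀ a : NodeOrder n d,
        ¬ (∀ i ≤ t+1, routeSP VB (gluedAt tc a f) s i ∈ VB) := by
      intro a hcon
      apply hPt
      intro i hi
      rw [route_gluedAt_indep tc a₀ a f s hi]
      exact hcon i (le_trans hi (Nat.le_succ t))
    have : (∑ a : NodeOrder n d,
        if (∀ i ≤ t+1, routeSP VB (gluedAt tc a f) s i ∈ VB) then 1 else 0) = 0 :=
      Finset.sum_eq_zero (fun a _ => by rw [if_neg (hz a)])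
    rw [this, Nat.mul_zero]
    exact Nat.zero_le _

lemma count_main (hn : 3 ≤ n) (hd : d ∉ VB) {C1 : ℕ} (s : Fin n) :
    ∀ t < C1, (n - 2) ^ t * ((univ : Finset (Fin C1 → NodeOrder n d)).filter
        (fun g => ∀ i ≤ t, routeSP VB g s i ∈ VB)).card
      ≤ VB.card ^ t * Fintype.card (Fin C1 → NodeOrder n d) := by
  intro t
  induction t with
  | zero =>
    intro _
    simp only [pow_zero, one_mul]
    rw [← Finset.card_univ]
    exact Finset.card_filter_le _ _
  | succ t ih =>
    intro ht1
    have ht : t < C1 := Nat.lt_of_succ_lt ht1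
    calc (n - 2) ^ (t+1) * ((univ : Finset (Fin C1 → NodeOrder n d)).filter
          (fun g => ∀ i ≤ t + 1, routeSP VB g s i ∈ VB)).card
        = (n - 2) ^ t * ((n - 2) * ((univ : Finset (Fin C1 → NodeOrder n d)).filter
          (fun g => ∀ i ≤ t + 1, routeSP VB g s i ∈ VB)).card) := by ring
      _ ≤ (n - 2) ^ t * (VB.card * ((univ : Finset (Fin C1 → NodeOrder n d)).filter
          (fun g => ∀ i ≤ t, routeSP VB g s i ∈ VB)).card) :=
          Nat.mul_le_mul_left _ (count_step hn hd s ht)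
      _ = VB.card * ((n - 2) ^ t * ((univ : Finset (Fin C1 → NodeOrder n d)).filter
          (fun g => ∀ i ≤ t, routeSP VB g s i ∈ VB)).card) := by ring
      _ ≤ VB.card * (VB.card ^ t * Fintype.card (Fin C1 → NodeOrder n d)) :=
          Nat.mul_le_mul_left _ (ih ht)
      _ = VB.card ^ (t+1) * Fintype.card (Fin C1 → NodeOrder n d) := by ring

theorem shared_permutations_few_hops (ε : ℝ) (hε0 : 0 < ε) (hε1 : ε < 1) :
    ∃ N : ℕ, ∀ n : ℕ, N ≤ n →
      ∀ (d : Fin n) (VB : Finset (Fin n)), d ∉ VB → (VB.card : ℝ) ≤ ε * n →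
        ∃ C1 : ℕ, (C1 : ℝ) ≤ 5 * Real.logb (1 / ε) n ∧
          ∀ s : Fin n,
            1 - 1 / (n : ℝ) ^ 3 ≤
              unifProb (fun g : Fin C1 → NodeOrder n d =>
                routeSP VB g s C1 = d) := by
  classical
  have hb1 : (1 : ℝ) < 1 / ε := one_lt_one_div hε0 hε1
  have hq1 : ε ^ ((1:ℝ)/4) < 1 := Real.rpow_lt_one (le_of_lt hε0) hε1 (by norm_num)
  have hq0 : 0 < ε ^ ((1:ℝ)/4) := Real.rpow_pos_of_pos hε0 _
  have hdenom : 0 < 1 - ε ^ ((1:ℝ)/4) := by linarith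
  refine ⟨4 + ⌈(1/ε)^2⌉₊ + ⌈2 / (1 - ε ^ ((1:ℝ)/4))⌉₊, ?_⟩
  intro n hN d VB hd hB
  have hn4 : 4 ≤ n := by omega
  have hn0R : (0:ℝ) < n := by positivity
  set L := Real.logb (1/ε) n with hL
  -- L ≥ 2
  have hL2 : (2:ℝ) ≤ L := by
    apply (Real.le_logb_iff_rpow_le hb1 hn0R).mpr
    rw [show ((2:ℝ)) = ((2:ℕ):ℝ) by norm_num, Real.rpow_natCast]
    have h1 : (⌈(1/ε)^2⌉₊ : ℝ) ≤ n := by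
      have : ⌈(1/ε)^2⌉₊ ≤ n := by omega
      exact_mod_cast this
    exact le_trans (Nat.le_ceil _) h1
  have hL0 : (0:ℝ) ≤ 4 * L := by linarith
  set C1 := ⌊4 * L⌋₊ + 2 with hC1
  set m := ⌊4 * L⌋₊ + 1 with hm
  have hmC1 : m < C1 := by omega
  have hC1le : (C1 : ℝ) ≤ 5 * L := by
    have h1 : (⌊4 * L⌋₊ : ℝ) ≤ 4 * L := Nat.floor_le hL0
    have : (C1 : ℝ) = (⌊4 * L⌋₊ : ℝ) + 2 := by exact_mod_cast rfl
    rw [this]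
    linarith
  have hm4L : 4 * L ≤ (m : ℝ) := by
    have := Nat.lt_floor_add_one (4 * L)
    have h2 : (m : ℝ) = (⌊4 * L⌋₊ : ℝ) + 1 := by exact_mod_cast rfl
    rw [h2]
    linarith
  -- ε n ≤ ε^{3/4} (n - 2)
  have hεn : ε * n ≤ ε ^ ((3:ℝ)/4) * ((n:ℝ) - 2) := by
    have h1 : 2 / (1 - ε ^ ((1:ℝ)/4)) ≤ n := by
      have : (⌈2 / (1 - ε ^ ((1:ℝ)/4))⌉₊ : ℝ) ≤ n := by
        have : ⌈2 / (1 - ε ^ ((1:ℝ)/4))⌉₊ ≤ n := by omega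
        exact_mod_cast this
      exact le_trans (Nat.le_ceil _) this
    have h2 : 2 ≤ (n:ℝ) * (1 - ε ^ ((1:ℝ)/4)) := by
      rw [div_le_iff₀ hdenom] at h1
      linarith
    have h3 : ε ^ ((1:ℝ)/4) * n ≤ (n:ℝ) - 2 := by nlinarith
    have h4 : ε ^ ((3:ℝ)/4) * (ε ^ ((1:ℝ)/4) * n) ≤ ε ^ ((3:ℝ)/4) * ((n:ℝ) - 2) :=
      mul_le_mul_of_nonneg_left h3 (le_of_lt (Real.rpow_pos_of_pos hε0 _))
    have h5 : ε ^ ((3:ℝ)/4) * ε ^ ((1:ℝ)/4) = ε := by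
      rw [← Real.rpow_add hε0]
      norm_num
    calc ε * n = ε ^ ((3:ℝ)/4) * ε ^ ((1:ℝ)/4) * n := by rw [h5]
      _ = ε ^ ((3:ℝ)/4) * (ε ^ ((1:ℝ)/4) * n) := by ring
      _ ≤ ε ^ ((3:ℝ)/4) * ((n:ℝ) - 2) := h4
  refine ⟨C1, hC1le, ?_⟩
  intro s
  -- instance: nonempty order
  have hcard : Fintype.card (Fin (n-1)) = Fintype.card {v : Fin n // v ≠ d} := by
    simp [Fintype.card_subtype_compl, Fintype.card_subtype_eq]
  obtain ⟨a₀⟩ : Nonempty (NodeOrder n d) := Fintype.card_eq.mp hcard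
  have hTpos : 0 < Fintype.card (Fin C1 → NodeOrder n d) :=
    Fintype.card_pos_iff.mpr ⟨fun _ => a₀⟩
  set T := Fintype.card (Fin C1 → NodeOrder n d) with hT
  set failS := (univ : Finset (Fin C1 → NodeOrder n d)).filter
    (fun g => ¬ routeSP VB g s C1 = d) with hfailS
  set succS := (univ : Finset (Fin C1 → NodeOrder n d)).filter
    (fun g => routeSP VB g s C1 = d) with hsuccS
  have hsplit : succS.card + failS.card = T := by
    rw [hsuccS, hfailS, hT, ← Finset.card_univ]
    exact Finset.card_filter_add_card_filter_not _
  -- fail ⊆ P m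
  have hsub : failS ⊆ (univ : Finset (Fin C1 → NodeOrder n d)).filter
      (fun g => ∀ i ≤ m, routeSP VB g s i ∈ VB) := by
    intro g hg
    simp only [hfailS, mem_filter, mem_univ, true_and] at hg ⊢
    intro i hi
    exact routeSP_fail_mem hd g s hg i (by omega)
  have hmain := count_main (by omega : 3 ≤ n) hd s m hmC1
  -- real versions
  have hcR : (0:ℝ) < ((n - 2 : ℕ) : ℝ) := by
    have : 2 ≤ n - 2 := by omega
    have : (2:ℝ) ≤ ((n-2:ℕ):ℝ) := by exact_mod_cast this
    linarith
  have hTR : (0:ℝ) < (T:ℝ) := by exact_mod_cast hTpos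
  have hfail_le : (failS.card : ℝ) * ((n-2:ℕ):ℝ)^m ≤ ((VB.card:ℝ))^m * T := by
    have h1 : failS.card ≤ ((univ : Finset (Fin C1 → NodeOrder n d)).filter
        (fun g => ∀ i ≤ m, routeSP VB g s i ∈ VB)).card := Finset.card_le_card hsub
    have h2 : (n - 2)^m * failS.card ≤ VB.card ^ m * T :=
      le_trans (Nat.mul_le_mul_left _ h1) hmain
    calc (failS.card : ℝ) * ((n-2:ℕ):ℝ)^m
        = (((n-2)^m * failS.card : ℕ) : ℝ) := by push_cast; ring
      _ ≤ ((VB.card^m * T : ℕ) : ℝ) := by exact_mod_cast h2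
      _ = ((VB.card:ℝ))^m * T := by push_cast; ring
  have hratio : (failS.card : ℝ) / T ≤ ((VB.card:ℝ) / ((n-2:ℕ):ℝ))^m := by
    rw [div_pow, div_le_div_iff₀ hTR (pow_pos hcR m)]
    linarith [hfail_le]
  -- (B/(n-2))^m ≤ (ε^{3/4})^m
  have hc_eq : ((n-2:ℕ):ℝ) = (n:ℝ) - 2 := by
    have : 2 ≤ n := by omega
    push_cast [Nat.cast_sub this]
    ring
  have hbase : (VB.card : ℝ) / ((n-2:ℕ):ℝ) ≤ ε ^ ((3:ℝ)/4) := by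
    rw [div_le_iff₀ hcR, hc_eq]
    calc (VB.card : ℝ) ≤ ε * n := hB
      _ ≤ ε ^ ((3:ℝ)/4) * ((n:ℝ) - 2) := hεn
  have hpow : ((VB.card:ℝ) / ((n-2:ℕ):ℝ))^m ≤ (ε ^ ((3:ℝ)/4))^m :=
    pow_le_pow_left₀ (div_nonneg (Nat.cast_nonneg _) (le_of_lt hcR)) hbase m
  -- (ε^{3/4})^m ≤ 1/n³
  have hfinal : (ε ^ ((3:ℝ)/4))^m ≤ 1 / (n:ℝ)^3 := by
    have h1 : (ε ^ ((3:ℝ)/4))^m = ε ^ (((3:ℝ)/4) * m) := by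
      rw [Real.rpow_mul (le_of_lt hε0), Real.rpow_natCast]
    have h2 : 3 * L ≤ ((3:ℝ)/4) * m := by linarith
    have h3 : ε ^ (((3:ℝ)/4) * m) ≤ ε ^ (3 * L) :=
      Real.rpow_le_rpow_of_exponent_ge hε0 (le_of_lt hε1) h2
    have h4 : ε ^ ((3:ℝ) * L) = 1 / (n:ℝ)^3 := by
      have hε_eq : ε = (1/ε)⁻¹ := by field_simp
      rw [hε_eq, Real.inv_rpow (by positivity), show (3:ℝ) * L = L * 3 by ring,
        Real.rpow_mul (by positivity), hL, Real.rpow_logb (by positivity)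
          (ne_of_gt hb1) hn0R, show ((3:ℝ)) = ((3:ℕ):ℝ) by norm_num,
        Real.rpow_natCast]
      rw [one_div]
    rw [h1]
    rw [h4] at h3
    exact h3
  have hratio' : (failS.card : ℝ) / T ≤ 1 / (n:ℝ)^3 :=
    le_trans hratio (le_trans hpow hfinal)
  -- conclude
  have hsucc : (succS.card : ℝ) = (T:ℝ) - failS.card := by
    have := hsplit
    push_cast [← this]
    ring
  unfold unifProb
  rw [Finset.filter_congr_decidable, ← hT, ← hsuccS]
  rw [hsucc, sub_div, div_self (ne_of_gt hTR)]
  have : (failS.card : ℝ) / T ≤ 1 / (n:ℝ)^3 := hratio'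
  linarith

end
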